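/- arXiv:1404.4415 — 2 statements merged into one kernel-verified Lean document; each statement's English description precedes it below -/
import Mathlib

section
/- Let λ ∈ 𝒫^l_n and let s, t be λ-tableaux with w_s ≤_L w_t in the left order on S_n. If t is standard, then s is standard. -/
namespace FS

open scoped Classical

/-- A node `(r, c, m)`: row `r`, column `c`, component `m` (all 1-based). -/
abbrev Node := ℕ × ℕ × ℕ

/-- Membership of a node in the Young diagram of the multipartition `p`,
where `p m r` is the `r`-th part of the `m`-th component. -/
def InDiag (p : ℕ → ℕ → ℕ) (A : Node) : Prop :=
  1 ≤ A.2.1 ∧ A.2.1 ≤ p A.2.2 A.1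

/-- `p` is an `l`-multipartition of `n` (components indexed `1,…,l`, rows indexed `1,…`). -/
def IsMP (l n : ℕ) (p : ℕ → ℕ → ℕ) : Prop :=
  (∀ m r, (m = 0 ∨ l < m ∨ r = 0 ∨ n < r) → p m r = 0) ∧
  (∀ m r, 1 ≤ r → p m (r + 1) ≤ p m r) ∧
  (∑ m ∈ Finset.Icc 1 l, ∑ r ∈ Finset.Icc 1 n, p m r) = n

/-- Total size of an `l`-multicomposition (rows bounded by `n`). -/
def mpSize (l n : ℕ) (p : ℕ → ℕ → ℕ) : ℕ :=
  ∑ m ∈ Finset.Icc 1 l, ∑ r ∈ Finset.Icc 1 n, p m r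

/-- Size of the `m`-th component. -/
def compSize (n : ℕ) (p : ℕ → ℕ → ℕ) (m : ℕ) : ℕ :=
  ∑ r ∈ Finset.Icc 1 n, p m r

/-- Length of column `c` of component `m`, i.e. `(p^(m))'_c`. -/
def colLen (n : ℕ) (p : ℕ → ℕ → ℕ) (m c : ℕ) : ℕ :=
  ((Finset.Icc 1 n).filter fun r => c ≤ p m r).card

/-- Dominance order on `l`-multicompositions: `Dom l N p q` means `p ⊵ q`. -/
def Dom (l N : ℕ) (p q : ℕ → ℕ → ℕ) : Prop :=
  ∀ m r, 1 ≤ m → m ≤ l →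
    (∑ m' ∈ Finset.Icc 1 (m - 1), compSize N q m') + ∑ r' ∈ Finset.Icc 1 r, q m r' ≤
      (∑ m' ∈ Finset.Icc 1 (m - 1), compSize N p m') + ∑ r' ∈ Finset.Icc 1 r, p m r'

/-- `t` is a `p`-tableau: a bijection from the diagram of `p` onto `{1,…,n}`. -/
def IsTab (n : ℕ) (p : ℕ → ℕ → ℕ) (t : Node → ℕ) : Prop :=
  (∀ A, InDiag p A → 1 ≤ t A ∧ t A ≤ n) ∧
  (∀ A B, InDiag p A → InDiag p B → t A = t B → A = B) ∧
  (∀ i, 1 ≤ i → i ≤ n → ∃ A, InDiag p A ∧ t A = i)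

/-- Entries increase from left to right along each row. -/
def RowStrict (p : ℕ → ℕ → ℕ) (t : Node → ℕ) : Prop :=
  ∀ r c m, InDiag p (r, c, m) → InDiag p (r, c + 1, m) → t (r, c, m) < t (r, c + 1, m)

/-- Entries increase down each column. -/
def ColStrict (p : ℕ → ℕ → ℕ) (t : Node → ℕ) : Prop :=
  ∀ r c m, InDiag p (r, c, m) → InDiag p (r + 1, c, m) → t (r, c, m) < t (r + 1, c, m)

/-- A standard tableau is both row-strict and column-strict. -/
def IsStd (p : ℕ → ℕ → ℕ) (t : Node → ℕ) : Prop := RowStrict p t ∧ ColStrict p t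

/-- The tableau `t_λ`, obtained by writing `1,…,n` in order down successive columns
from left to right (components from `l` down to `1`). -/
def colTab (l n : ℕ) (p : ℕ → ℕ → ℕ) : Node → ℕ := fun A =>
  (∑ m' ∈ Finset.Icc (A.2.2 + 1) l, compSize n p m') +
    (∑ c' ∈ Finset.Icc 1 (A.2.1 - 1), colLen n p A.2.2 c') + A.1

/-- The tableau `t^λ`, obtained by writing `1,…,n` in order along successive rows
from top to bottom (components from `1` up to `l`). -/
def rowTab (n : ℕ) (p : ℕ → ℕ → ℕ) : Node → ℕ := fun A =>
  (∑ m' ∈ Finset.Icc 1 (A.2.2 - 1), compSize n p m') +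
    (∑ r' ∈ Finset.Icc 1 (A.1 - 1), p A.2.2 r') + A.2.1

/-- The Coxeter generator `s_i = (i, i+1)` of the symmetric group. -/
def sw (i : ℕ) : Equiv.Perm ℕ := Equiv.swap i (i + 1)

/-- The product `s_{i_1} ⋯ s_{i_k}` corresponding to a word `L = [i_1,…,i_k]`. -/
def wordProd (L : List ℕ) : Equiv.Perm ℕ := (L.map sw).prod

/-- `L` is an expression for `w` in the Coxeter generators `s_1,…,s_{n-1}` of `S_n`. -/
def IsWord (n : ℕ) (L : List ℕ) (w : Equiv.Perm ℕ) : Prop :=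
  (∀ i ∈ L, 1 ≤ i ∧ i + 1 ≤ n) ∧ wordProd L = w

/-- The Coxeter length of `w ∈ S_n`. -/
noncomputable def len (n : ℕ) (w : Equiv.Perm ℕ) : ℕ :=
  sInf {k | ∃ L, IsWord n L w ∧ L.length = k}

/-- `L` is a reduced expression for `w ∈ S_n`. -/
def IsReduced (n : ℕ) (L : List ℕ) (w : Equiv.Perm ℕ) : Prop :=
  IsWord n L w ∧ L.length = len n w

/-- The Bruhat order on `S_n`: `x ≤ w` iff some reduced expression for `w` has an
expression for `x` as a subsequence. -/
def BruhatLE (n : ℕ) (x w : Equiv.Perm ℕ) : Prop :=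
  ∃ L, IsReduced n L w ∧ ∃ L', L'.Sublist L ∧ wordProd L' = x

/-- Strict Bruhat order. -/
def BruhatLT (n : ℕ) (x w : Equiv.Perm ℕ) : Prop := BruhatLE n x w ∧ x ≠ w

/-- The left (weak) order on `S_n`: `x ≤_L w` iff `ℓ(w) = ℓ(w x⁻¹) + ℓ(x)`. -/
def LeftLE (n : ℕ) (x w : Equiv.Perm ℕ) : Prop :=
  len n w = len n (w * x⁻¹) + len n x

/-- `w` is a permutation of `{1,…,n}` (fixing everything else). -/
def PermOf (n : ℕ) (w : Equiv.Perm ℕ) : Prop := ∀ i, i = 0 ∨ n < i → w i = i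

/-- `w` is the permutation sending the base tableau `base` to the tableau `t`
(e.g. `w = w_t` when `base = t_λ`). -/
def IsPermOfTab (n : ℕ) (p : ℕ → ℕ → ℕ) (base t : Node → ℕ) (w : Equiv.Perm ℕ) : Prop :=
  PermOf n w ∧ ∀ A, InDiag p A → w (base A) = t A

/-- `Shape(t↓j)`: the multicomposition whose `(m, r)` entry is the number of nodes in
row `r` of component `m` whose entry under `t` is at most `j`. -/
def shape (n : ℕ) (p : ℕ → ℕ → ℕ) (t : Node → ℕ) (j : ℕ) : ℕ → ℕ → ℕ :=
  fun m r => ((Finset.Icc 1 n).filter fun c => c ≤ p m r ∧ t (r, c, m) ≤ j).card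

/-- `Shape(t↓j)'`: the conjugate multicomposition, whose `(m, c)` entry is the number of
nodes in column `c` of component `l + 1 - m` whose entry under `t` is at most `j`. -/
def shapeConj (l n : ℕ) (p : ℕ → ℕ → ℕ) (t : Node → ℕ) (j : ℕ) : ℕ → ℕ → ℕ :=
  fun m c => ((Finset.Icc 1 n).filter fun r => c ≤ p (l + 1 - m) r ∧ t (r, c, l + 1 - m) ≤ j).card

/-- `A` lies weakly to the left of `B`. -/
def WeaklyLeft (A B : Node) : Prop :=
  B.2.2 < A.2.2 ∨ (A.2.2 = B.2.2 ∧ A.2.1 ≤ B.2.1)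

/-- `A` lies weakly above `B`. -/
def WeaklyAbove (A B : Node) : Prop :=
  A.2.2 < B.2.2 ∨ (A.2.2 = B.2.2 ∧ A.1 ≤ B.1)

/-- `A` lies weakly to the right of `B`. -/
def WeaklyRight (A B : Node) : Prop :=
  A.2.2 < B.2.2 ∨ (A.2.2 = B.2.2 ∧ B.2.1 ≤ A.2.1)

/-- `t` (a `mu`-tableau) is `lam`-column-dominated on `1,…,j`: each `i ≤ j` appears in `t`
at least as far to the left as it does in `t_lam`. -/
def ColDomOn (l n : ℕ) (lam mu : ℕ → ℕ → ℕ) (t : Node → ℕ) (j : ℕ) : Prop :=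
  ∀ i A B, 1 ≤ i → i ≤ j → InDiag mu A → t A = i → InDiag lam B →
    colTab l n lam B = i → WeaklyLeft A B

/-- `t` is weakly `lam`-column-dominated on `1,…,j`: each `i ≤ j` appears in `t` in a
component at least as far to the left as it does in `t_lam`. -/
def WColDomOn (l n : ℕ) (lam mu : ℕ → ℕ → ℕ) (t : Node → ℕ) (j : ℕ) : Prop :=
  ∀ i A B, 1 ≤ i → i ≤ j → InDiag mu A → t A = i → InDiag lam B →
    colTab l n lam B = i → B.2.2 ≤ A.2.2

/-- `t` (a `mu`-tableau) is `lam`-row-dominated on `1,…,j`: each `i ≤ j` appears in `t`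
at least as high as it does in `t^lam`. -/
def RowDomOn (n : ℕ) (lam mu : ℕ → ℕ → ℕ) (t : Node → ℕ) (j : ℕ) : Prop :=
  ∀ i A B, 1 ≤ i → i ≤ j → InDiag mu A → t A = i → InDiag lam B →
    rowTab n lam B = i → WeaklyAbove A B

/-- The multipartition `λ_L(c, m)`: the first `c` columns of component `m`, followed by
components `m+1,…,l`. -/
def leftPart (lam : ℕ → ℕ → ℕ) (c m : ℕ) : ℕ → ℕ → ℕ := fun k r =>
  if k = 0 then 0 else if k = 1 then min (lam m r) c else lam (m + k - 1) r

/-- The multipartition `λ_R(c, m)`: components `1,…,m-1`, followed by the part of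
component `m` after its first `c` columns. -/
def rightPart (lam : ℕ → ℕ → ℕ) (c m : ℕ) : ℕ → ℕ → ℕ := fun k r =>
  if k < m then lam k r else if k = m then lam m r - c else 0

/-- The multipartition `λ_T(r₀, m)`: components `1,…,m-1`, followed by the first `r₀`
rows of component `m`. -/
def topPart (lam : ℕ → ℕ → ℕ) (r₀ m : ℕ) : ℕ → ℕ → ℕ := fun k r =>
  if k < m then lam k r else if k = m then (if r ≤ r₀ then lam m r else 0) else 0

/-- The multipartition `λ_B(r₀, m)`: the rows of component `m` after row `r₀`, followed
by components `m+1,…,l`. -/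
def botPart (lam : ℕ → ℕ → ℕ) (r₀ m : ℕ) : ℕ → ℕ → ℕ := fun k r =>
  if k = 0 ∨ r = 0 then 0 else if k = 1 then lam m (r₀ + r) else lam (m + k - 1) r

/-- The glued tableau `t_L # t_R`: places `1,…,n_L` on the left part as in `t_L`, and
places `n_L + t_R(A)` at the node corresponding to each node `A` of the right part. -/
def glueLR (nL c m : ℕ) (tL tR : Node → ℕ) : Node → ℕ := fun A =>
  if A.2.2 < m then nL + tR A
  else if A.2.2 = m then
    (if A.2.1 ≤ c then tL (A.1, A.2.1, 1) else nL + tR (A.1, A.2.1 - c, m))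
  else tL (A.1, A.2.1, A.2.2 - m + 1)

/-- The tableau `t⁺` obtained from a tableau `t` of `μ_R(1,m)` by increasing all entries
by `k`, adjoining a first column with entries `1,…,k` to component `m`, and adjoining
empty components `m+1,…,l`. -/
def addFirstCol (k m : ℕ) (t : Node → ℕ) : Node → ℕ := fun A =>
  if A.2.2 = m then (if A.2.1 = 1 then A.1 else k + t (A.1, A.2.1 - 1, m))
  else k + t A

/-- The tableau `t⁺` obtained from a tableau `t` of `μ_L(d-1,m)` by adjoining empty
components `1,…,m-1` and adjoining a column `d` to component `m` with entries
`nk+1,…,nk+k` from top to bottom. -/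
def addLastCol (nk m d : ℕ) (t : Node → ℕ) : Node → ℕ := fun A =>
  if A.2.2 = m then (if A.2.1 = d then nk + A.1 else t (A.1, A.2.1, 1))
  else t (A.1, A.2.1, A.2.2 - m + 1)

/-- The `i`-th smallest element of a finite set of naturals (1-based). -/
def nthElt (S : Finset ℕ) (i : ℕ) : ℕ := (S.sort (· ≤ ·)).getD (i - 1) 0

/-- The set `S_B` of entries of `t_λ` lying in the bottom region (component `> m`, or
component `m` in a row `> r₀`). -/
noncomputable def SB (l n : ℕ) (lam : ℕ → ℕ → ℕ) (r₀ m : ℕ) : Finset ℕ :=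
  (Finset.Icc 1 n).filter fun i =>
    ∃ A, InDiag lam A ∧ colTab l n lam A = i ∧ (m < A.2.2 ∨ (A.2.2 = m ∧ r₀ < A.1))

/-- The glued tableau `t #̄ s`: on the bottom region the entries are `lab_B ∘ t` and on
the top region they are `lab_T ∘ s`, where `lab_B`, `lab_T` are the order-preserving
bijections onto `S_B`, `S_T`. -/
def glueBT (S_B S_T : Finset ℕ) (r₀ m : ℕ) (tB tT : Node → ℕ) : Node → ℕ := fun A =>
  if A.2.2 < m then nthElt S_T (tT A)
  else if A.2.2 = m then
    (if A.1 ≤ r₀ then nthElt S_T (tT A) else nthElt S_B (tB (A.1 - r₀, A.2.1, 1)))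
  else nthElt S_B (tB (A.1, A.2.1, A.2.2 - m + 1))

/-- The residue of a node `(r, c, m)` with respect to the multicharge `κ`:
`κ_m + c - r` in `ℤ/eℤ` (with `ZMod 0 = ℤ` encoding `e = ∞`). -/
def resNode (e : ℕ) (κ : ℕ → ZMod e) (A : Node) : ZMod e :=
  κ A.2.2 + (A.2.1 : ZMod e) - (A.1 : ZMod e)

/-! ### Auxiliary lemmas -/

section Aux

lemma permOf_apply_mem {n j : ℕ} {w : Equiv.Perm ℕ} (hw : PermOf n w)
    (hj : 1 ≤ j) (hjn : j ≤ n) : 1 ≤ w j ∧ w j ≤ n := by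
  by_contra h
  have hbad : w j = 0 ∨ n < w j := by omega
  have h1 : w (w j) = w j := hw _ hbad
  have h2 : w j = j := w.injective h1
  omega

lemma permOf_inv {n : ℕ} {w : Equiv.Perm ℕ} (hw : PermOf n w) : PermOf n w⁻¹ := by
  intro i hi
  have h := hw i hi
  calc w⁻¹ i = w⁻¹ (w i) := by rw [h]
    _ = i := w.symm_apply_apply i

lemma permOf_mul {n : ℕ} {u w : Equiv.Perm ℕ} (hu : PermOf n u) (hw : PermOf n w) :
    PermOf n (u * w) := by
  intro i hi
  simp [Equiv.Perm.mul_apply, hw i hi, hu i hi]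

lemma permOf_one {n : ℕ} : PermOf n (1 : Equiv.Perm ℕ) := fun i _ => rfl

lemma permOf_sw {n i : ℕ} (hi : 1 ≤ i) (hin : i + 1 ≤ n) : PermOf n (sw i) := by
  intro j hj
  simp only [sw, Equiv.swap_apply_def]
  split_ifs <;> omega

lemma sw_lt_iff {i x y : ℕ} (h : x < y) : sw i y < sw i x ↔ x = i ∧ y = i + 1 := by
  simp only [sw, Equiv.swap_apply_def]
  split_ifs <;> omega

lemma sw_lt_of_lt {i x y : ℕ} (h : x < y) (hni : ¬(x = i ∧ y = i + 1)) :
    sw i x < sw i y := by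
  rcases lt_trichotomy (sw i x) (sw i y) with h' | h' | h'
  · exact h'
  · exact absurd ((sw i).injective h') (by omega)
  · exact absurd ((sw_lt_iff h).mp h') hni

/-- The number of inversions of `w` on `{1,…,n}`. -/
noncomputable def invn (n : ℕ) (w : Equiv.Perm ℕ) : ℕ :=
  (((Finset.Icc 1 n) ×ˢ (Finset.Icc 1 n)).filter fun p => p.1 < p.2 ∧ w p.2 < w p.1).card

lemma invn_one {n : ℕ} : invn n (1 : Equiv.Perm ℕ) = 0 := by
  rw [invn, Finset.card_eq_zero, Finset.filter_eq_empty_iff]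
  rintro ⟨x, y⟩ _
  simp only [Equiv.Perm.one_apply]
  omega

lemma invn_sw_mul_of_lt {n i : ℕ} {w : Equiv.Perm ℕ} (hw : PermOf n w)
    (hi : 1 ≤ i) (hin : i + 1 ≤ n) (hlt : w⁻¹ i < w⁻¹ (i + 1)) :
    invn n (sw i * w) = invn n w + 1 := by
  have hwa : w (w⁻¹ i) = i := w.apply_symm_apply i
  have hwb : w (w⁻¹ (i + 1)) = i + 1 := w.apply_symm_apply (i + 1)
  have hamem := permOf_apply_mem (permOf_inv hw) hi (by omega)
  have hbmem := permOf_apply_mem (permOf_inv hw) (show 1 ≤ i + 1 by omega) hin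
  have key : (((Finset.Icc 1 n) ×ˢ (Finset.Icc 1 n)).filter
        fun p => p.1 < p.2 ∧ (sw i * w) p.2 < (sw i * w) p.1)
      = insert (w⁻¹ i, w⁻¹ (i + 1))
        (((Finset.Icc 1 n) ×ˢ (Finset.Icc 1 n)).filter
          fun p => p.1 < p.2 ∧ w p.2 < w p.1) := by
    ext ⟨x, y⟩
    simp only [Finset.mem_insert, Finset.mem_filter, Finset.mem_product, Finset.mem_Icc,
      Prod.mk.injEq]
    simp only [Equiv.Perm.mul_apply]
    constructor
    · rintro ⟨⟨hx, hy⟩, hxy, hswap⟩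
      rcases lt_trichotomy (w x) (w y) with h | h | h
      · obtain ⟨h1, h2⟩ := (sw_lt_iff h).mp hswap
        left
        constructor
        · rw [← h1, Equiv.Perm.inv_def, Equiv.symm_apply_apply]
        · rw [← h2, Equiv.Perm.inv_def, Equiv.symm_apply_apply]
      · exact absurd (w.injective h) (by omega)
      · right; exact ⟨⟨hx, hy⟩, hxy, h⟩
    · rintro (⟨hx, hy⟩ | ⟨⟨hx, hy⟩, hxy, h⟩)
      · subst hx; subst hy
        refine ⟨⟨hamem, hbmem⟩, hlt, ?_⟩
        rw [hwa, hwb]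
        simp only [sw, Equiv.swap_apply_left, Equiv.swap_apply_right]
        omega
      · refine ⟨⟨hx, hy⟩, hxy, ?_⟩
        refine sw_lt_of_lt h ?_
        rintro ⟨h1, h2⟩
        have hya : y = w⁻¹ i := by rw [← h1, Equiv.Perm.inv_def, Equiv.symm_apply_apply]
        have hxb : x = w⁻¹ (i + 1) := by rw [← h2, Equiv.Perm.inv_def, Equiv.symm_apply_apply]
        omega
  have hnotmem : (w⁻¹ i, w⁻¹ (i + 1)) ∉
      (((Finset.Icc 1 n) ×ˢ (Finset.Icc 1 n)).filter fun p => p.1 < p.2 ∧ w p.2 < w p.1) := by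
    intro hmem
    have := (Finset.mem_filter.mp hmem).2.2
    rw [hwa, hwb] at this
    omega
  rw [invn, key, Finset.card_insert_of_notMem hnotmem, invn]

lemma sw_sw_mul {i : ℕ} (w : Equiv.Perm ℕ) : sw i * (sw i * w) = w := by
  rw [← mul_assoc, sw, Equiv.swap_mul_self, one_mul]

lemma invn_step {n i : ℕ} {w : Equiv.Perm ℕ} (hw : PermOf n w)
    (hi : 1 ≤ i) (hin : i + 1 ≤ n) :
    (w⁻¹ i < w⁻¹ (i + 1) ∧ invn n (sw i * w) = invn n w + 1) ∨
    (w⁻¹ (i + 1) < w⁻¹ i ∧ invn n (sw i * w) + 1 = invn n w) := by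
  rcases lt_trichotomy (w⁻¹ i) (w⁻¹ (i + 1)) with h | h | h
  · exact Or.inl ⟨h, invn_sw_mul_of_lt hw hi hin h⟩
  · have : (i : ℕ) = i + 1 := by
      have := congrArg w h
      rwa [Equiv.Perm.inv_def, w.apply_symm_apply, w.apply_symm_apply] at this
    omega
  · refine Or.inr ⟨h, ?_⟩
    set u := sw i * w with hu
    have hpu : PermOf n u := permOf_mul (permOf_sw hi hin) hw
    have huinv : u⁻¹ = w⁻¹ * sw i := by
      rw [hu, mul_inv_rev]
      congr 1
    have h1 : u⁻¹ i = w⁻¹ (i + 1) := by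
      rw [huinv, Equiv.Perm.mul_apply, sw, Equiv.swap_apply_left]
    have h2 : u⁻¹ (i + 1) = w⁻¹ i := by
      rw [huinv, Equiv.Perm.mul_apply, sw, Equiv.swap_apply_right]
    have := invn_sw_mul_of_lt hpu hi hin (by rw [h1, h2]; exact h)
    rw [sw_sw_mul] at this
    rw [this]

lemma no_descent_id {n : ℕ} {w : Equiv.Perm ℕ} (hw : PermOf n w)
    (h : ∀ i, 1 ≤ i → i + 1 ≤ n → w i < w (i + 1)) : ∀ j, w j = j := by
  have hlow : ∀ a, 1 ≤ a → a ≤ n → a ≤ w a := by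
    intro a ha
    induction a with
    | zero => omega
    | succ a ih =>
      intro han
      rcases Nat.eq_or_lt_of_le ha with h0 | h0
      · have := (permOf_apply_mem hw (by omega) han).1; omega
      · have h1 : 1 ≤ a := by omega
        have h2 := ih h1 (by omega)
        have := h a h1 han
        omega
  have hup : ∀ k a, 1 ≤ a → a ≤ n → n - k ≤ a → w a ≤ a := by
    intro k
    induction k with
    | zero =>
      intro a ha han hna
      have : a = n := by omega
      subst this
      exact (permOf_apply_mem hw ha han).2
    | succ k ih =>
      intro a ha han hna
      by_cases hc : n - k ≤ a
      · exact ih a ha han hc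
      · have ha1 : a + 1 ≤ n := by omega
        have := h a ha ha1
        have := ih (a + 1) (by omega) ha1 (by omega)
        omega
  intro j
  by_cases hj : 1 ≤ j ∧ j ≤ n
  · have := hlow j hj.1 hj.2
    have := hup n j hj.1 hj.2 (by omega)
    omega
  · exact hw j (by omega)

lemma invn_eq_zero_iff_id {n : ℕ} {w : Equiv.Perm ℕ} (hw : PermOf n w)
    (h : invn n w = 0) : w = 1 := by
  have hdes : ∀ i, 1 ≤ i → i + 1 ≤ n → w i < w (i + 1) := by
    intro i hi hin
    have hne : w i ≠ w (i + 1) := fun hh => by have := w.injective hh; omega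
    rcases lt_or_ge (w i) (w (i + 1)) with h' | h'
    · exact h'
    have : (i, i + 1) ∈ (((Finset.Icc 1 n) ×ˢ (Finset.Icc 1 n)).filter
        fun p => p.1 < p.2 ∧ w p.2 < w p.1) := by
      simp only [Finset.mem_filter, Finset.mem_product, Finset.mem_Icc]
      exact ⟨⟨⟨hi, by omega⟩, ⟨by omega, hin⟩⟩, by omega, by omega⟩
    rw [invn, Finset.card_eq_zero] at h
    rw [h] at this
    exact absurd this (Finset.notMem_empty _)
  exact Equiv.ext (no_descent_id hw hdes)

lemma descent_or_id {n : ℕ} {w : Equiv.Perm ℕ} (hw : PermOf n w) :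
    (∃ i, 1 ≤ i ∧ i + 1 ≤ n ∧ w (i + 1) < w i) ∨ w = 1 := by
  by_cases h : ∃ i, 1 ≤ i ∧ i + 1 ≤ n ∧ w (i + 1) < w i
  · exact Or.inl h
  · push_neg at h
    right
    refine Equiv.ext (no_descent_id hw fun i hi hin => ?_)
    have h1 := h i hi hin
    have hne : w i ≠ w (i + 1) := fun hh => by have := w.injective hh; omega
    omega

lemma wordProd_nil : wordProd [] = 1 := by simp [wordProd]

lemma wordProd_cons (i : ℕ) (L : List ℕ) : wordProd (i :: L) = sw i * wordProd L := by
  simp [wordProd]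

lemma permOf_wordProd {n : ℕ} {L : List ℕ} (h : ∀ i ∈ L, 1 ≤ i ∧ i + 1 ≤ n) :
    PermOf n (wordProd L) := by
  induction L with
  | nil => rw [wordProd_nil]; exact permOf_one
  | cons i L ih =>
    rw [wordProd_cons]
    have hi := h i (List.mem_cons_self)
    exact permOf_mul (permOf_sw hi.1 hi.2) (ih fun j hj => h j (List.mem_cons_of_mem i hj))

lemma exists_word_invn_aux {n : ℕ} : ∀ N (w : Equiv.Perm ℕ), PermOf n w → invn n w ≤ N →
    ∃ L, IsWord n L w ∧ L.length = invn n w := by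
  intro N
  induction N with
  | zero =>
    intro w hw hN
    have hw1 : w = 1 := invn_eq_zero_iff_id hw (by omega)
    subst hw1
    exact ⟨[], ⟨fun i hi => absurd hi (List.not_mem_nil), wordProd_nil⟩,
      by rw [invn_one]; rfl⟩
  | succ N ih =>
    intro w hw hN
    rcases descent_or_id (permOf_inv hw) with ⟨i, hi, hin, hd⟩ | hid
    · set u := sw i * w with hu
      have hpu : PermOf n u := permOf_mul (permOf_sw hi hin) hw
      have hstep := invn_step hw hi hin
      rcases hstep with ⟨hlt, _⟩ | ⟨_, heq⟩
      · omega
      · rw [← hu] at heq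
        obtain ⟨L, hL, hlen⟩ := ih u hpu (by omega)
        refine ⟨i :: L, ⟨?_, ?_⟩, ?_⟩
        · intro j hj
          rcases List.mem_cons.mp hj with h | h
          · subst h; exact ⟨hi, hin⟩
          · exact hL.1 j h
        · rw [wordProd_cons, hL.2, hu, sw_sw_mul]
        · simp only [List.length_cons, hlen]; omega
    · have : w = 1 := by rw [← inv_inv w, hid, inv_one]
      subst this
      exact ⟨[], ⟨fun i hi => absurd hi (List.not_mem_nil), wordProd_nil⟩,
        by rw [invn_one]; rfl⟩

lemma exists_word_invn {n : ℕ} {w : Equiv.Perm ℕ} (hw : PermOf n w) :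
    ∃ L, IsWord n L w ∧ L.length = invn n w :=
  exists_word_invn_aux (invn n w) w hw le_rfl

lemma invn_le_word_length {n : ℕ} : ∀ (L : List ℕ) (w : Equiv.Perm ℕ),
    IsWord n L w → invn n w ≤ L.length := by
  intro L
  induction L with
  | nil =>
    intro w hL
    have : w = 1 := by rw [← hL.2, wordProd_nil]
    subst this
    rw [invn_one]
    exact Nat.zero_le _
  | cons i L ih =>
    intro w hL
    have hi := hL.1 i (List.mem_cons_self)
    set u := wordProd L with hu
    have hLu : IsWord n L u := ⟨fun j hj => hL.1 j (List.mem_cons_of_mem i hj), rfl⟩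
    have hpu : PermOf n u := permOf_wordProd hLu.1
    have hw : w = sw i * u := by rw [← hL.2, wordProd_cons]
    have := ih u hLu
    rcases invn_step hpu hi.1 hi.2 with ⟨_, h⟩ | ⟨_, h⟩ <;>
      simp only [hw, List.length_cons] <;> omega

lemma len_eq_invn {n : ℕ} {w : Equiv.Perm ℕ} (hw : PermOf n w) : len n w = invn n w := by
  obtain ⟨L, hL, hlen⟩ := exists_word_invn hw
  apply le_antisymm
  · exact Nat.sInf_le ⟨L, hL, hlen⟩
  · have hne : {k | ∃ L, IsWord n L w ∧ L.length = k}.Nonempty := ⟨_, L, hL, rfl⟩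
    obtain ⟨M, hM, hMlen⟩ := Nat.sInf_mem hne
    rw [len, ← hMlen]
    exact invn_le_word_length M w hM

lemma invn_mul_le {n : ℕ} {u w : Equiv.Perm ℕ} (hu : PermOf n u) (hw : PermOf n w) :
    invn n (u * w) ≤ invn n u + invn n w := by
  obtain ⟨L1, hL1, h1⟩ := exists_word_invn hu
  obtain ⟨L2, hL2, h2⟩ := exists_word_invn hw
  have hword : IsWord n (L1 ++ L2) (u * w) := by
    constructor
    · intro i hi
      rcases List.mem_append.mp hi with h | h
      · exact hL1.1 i h
      · exact hL2.1 i h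
    · rw [wordProd, List.map_append, List.prod_append, ← wordProd, ← wordProd, hL1.2, hL2.2]
  have := invn_le_word_length (L1 ++ L2) (u * w) hword
  rw [List.length_append] at this
  omega

/-! ### Column tableau adjacency lemmas -/

lemma colTab_row_adj {l n : ℕ} {lam : ℕ → ℕ → ℕ} (hlam : IsMP l n lam) {r c m : ℕ}
    (hC : InDiag lam (r, c, m)) (hD : InDiag lam (r, c + 1, m)) :
    colTab l n lam (r, c, m) < colTab l n lam (r, c + 1, m) := by
  have hc : 1 ≤ c := hC.1
  have hcr : c ≤ lam m r := hC.2
  have hrn : 1 ≤ r ∧ r ≤ n := by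
    by_contra h
    have h0 : lam m r = 0 ∨ ¬(r = 0 ∨ n < r) := by
      by_cases hb : r = 0 ∨ n < r
      · exact Or.inl (hlam.1 m r (by tauto))
      · exact Or.inr hb
    rcases h0 with h0 | h0 <;> omega
  have hcol : 1 ≤ colLen n lam m c := by
    rw [colLen]
    refine Finset.card_pos.mpr ⟨r, ?_⟩
    simp only [Finset.mem_filter, Finset.mem_Icc]
    exact ⟨⟨hrn.1, hrn.2⟩, hcr⟩
  have hsum : ∑ c' ∈ Finset.Icc 1 (c + 1 - 1), colLen n lam m c'
      = (∑ c' ∈ Finset.Icc 1 (c - 1), colLen n lam m c') + colLen n lam m c := by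
    have hc1 : c + 1 - 1 = (c - 1) + 1 := by omega
    rw [hc1, Finset.sum_Icc_succ_top (by omega : 1 ≤ (c - 1) + 1)]
    congr 2
    omega
  simp only [colTab]
  rw [hsum]
  omega

lemma colTab_col_adj {l n : ℕ} {lam : ℕ → ℕ → ℕ} {r c m : ℕ} :
    colTab l n lam (r, c, m) < colTab l n lam (r + 1, c, m) := by
  simp only [colTab]
  omega

/-! ### Swap preserves standardness -/

lemma swap_std {l n : ℕ} {lam : ℕ → ℕ → ℕ} (hlam : IsMP l n lam) {i : ℕ}
    {v : Equiv.Perm ℕ} (hd : v⁻¹ (i + 1) < v⁻¹ i)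
    (hstd : IsStd lam (fun A => v (colTab l n lam A))) :
    IsStd lam (fun A => (sw i * v) (colTab l n lam A)) := by
  constructor
  · intro r c m hC hD
    have hlt := hstd.1 r c m hC hD
    simp only [Equiv.Perm.mul_apply]
    refine sw_lt_of_lt hlt ?_
    rintro ⟨h1, h2⟩
    have hc1 : colTab l n lam (r, c, m) = v⁻¹ i := by
      rw [← h1, Equiv.Perm.inv_def, Equiv.symm_apply_apply]
    have hc2 : colTab l n lam (r, c + 1, m) = v⁻¹ (i + 1) := by
      rw [← h2, Equiv.Perm.inv_def, Equiv.symm_apply_apply]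
    have := colTab_row_adj hlam hC hD
    omega
  · intro r c m hC hD
    have hlt := hstd.2 r c m hC hD
    simp only [Equiv.Perm.mul_apply]
    refine sw_lt_of_lt hlt ?_
    rintro ⟨h1, h2⟩
    have hc1 : colTab l n lam (r, c, m) = v⁻¹ i := by
      rw [← h1, Equiv.Perm.inv_def, Equiv.symm_apply_apply]
    have hc2 : colTab l n lam (r + 1, c, m) = v⁻¹ (i + 1) := by
      rw [← h2, Equiv.Perm.inv_def, Equiv.symm_apply_apply]
    have := @colTab_col_adj l n lam r c m
    omega

/-! ### Main descent induction -/

lemma main_aux {l n : ℕ} {lam : ℕ → ℕ → ℕ} (hlam : IsMP l n lam) :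
    ∀ N (u w : Equiv.Perm ℕ), PermOf n u → PermOf n w → invn n u = N →
    invn n (u * w) = invn n u + invn n w →
    IsStd lam (fun A => (u * w) (colTab l n lam A)) →
    IsStd lam (fun A => w (colTab l n lam A)) := by
  intro N
  induction N with
  | zero =>
    intro u w hu hw hN _ hstd
    have hu1 : u = 1 := invn_eq_zero_iff_id hu hN
    subst hu1
    rw [one_mul] at hstd
    exact hstd
  | succ N ih =>
    intro u w hu hw hN hadd hstd
    have hune : u ≠ 1 := by
      intro h
      rw [h, invn_one] at hN
      omega
    rcases descent_or_id (permOf_inv hu) with ⟨i, hi, hin, hd⟩ | hid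
    · set u' := sw i * u with hu'
      have hpu' : PermOf n u' := permOf_mul (permOf_sw hi hin) hu
      have hstepu := invn_step hu hi hin
      rw [← hu'] at hstepu
      have hinvu' : invn n u' = N := by
        rcases hstepu with ⟨hlt, _⟩ | ⟨_, heq⟩
        · omega
        · omega
      have huw : PermOf n (u * w) := permOf_mul hu hw
      have hassoc : sw i * (u * w) = u' * w := by rw [hu', mul_assoc]
      have hle : invn n (u' * w) ≤ N + invn n w := by
        have := invn_mul_le hpu' hw
        omega
      have hstepuw := invn_step huw hi hin
      rcases hstepuw with ⟨_, heq⟩ | ⟨hduw, heq⟩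
      · rw [hassoc] at heq
        omega
      · rw [hassoc] at heq
        have hstd' : IsStd lam (fun A => (u' * w) (colTab l n lam A)) := by
          have := swap_std hlam hduw hstd
          rwa [hassoc] at this
        exact ih u' w hpu' hw hinvu' (by omega) hstd'
    · exact absurd (by rw [← inv_inv u, hid, inv_one]) hune

end Aux

/-- If `s, t` are `λ`-tableaux with `w_s ≤_L w_t` in the left order
and `t` is standard, then `s` is standard. -/
theorem left_order_standard (l n : ℕ) (hl : 1 ≤ l) (hn : 1 ≤ n)
    (lam : ℕ → ℕ → ℕ) (hlam : IsMP l n lam)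
    (s t : Node → ℕ) (hs : IsTab n lam s) (ht : IsTab n lam t)
    (ws wt : Equiv.Perm ℕ)
    (hws : IsPermOfTab n lam (colTab l n lam) s ws)
    (hwt : IsPermOfTab n lam (colTab l n lam) t wt)
    (hle : LeftLE n ws wt) (htstd : IsStd lam t) :
    IsStd lam s := by
  obtain ⟨hwsP, hwsE⟩ := hws
  obtain ⟨hwtP, hwtE⟩ := hwt
  have hpu : PermOf n (wt * ws⁻¹) := permOf_mul hwtP (permOf_inv hwsP)
  have huw : wt * ws⁻¹ * ws = wt := inv_mul_cancel_right wt ws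
  have hle' : len n wt = len n (wt * ws⁻¹) + len n ws := hle
  have hlen : invn n (wt * ws⁻¹ * ws) = invn n (wt * ws⁻¹) + invn n ws := by
    rw [huw]
    have h1 := len_eq_invn hwtP
    have h2 := len_eq_invn hwsP
    have h3 := len_eq_invn hpu
    omega
  have hstdt : IsStd lam (fun A => (wt * ws⁻¹ * ws) (colTab l n lam A)) := by
    rw [huw]
    constructor
    · intro r c m hC hD
      show wt (colTab l n lam (r, c, m)) < wt (colTab l n lam (r, c + 1, m))
      rw [hwtE _ hC, hwtE _ hD]
      exact htstd.1 r c m hC hD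
    · intro r c m hC hD
      show wt (colTab l n lam (r, c, m)) < wt (colTab l n lam (r + 1, c, m))
      rw [hwtE _ hC, hwtE _ hD]
      exact htstd.2 r c m hC hD
  have hstds := main_aux hlam (invn n (wt * ws⁻¹)) (wt * ws⁻¹) ws hpu hwsP rfl hlen hstdt
  constructor
  · intro r c m hC hD
    have h := hstds.1 r c m hC hD
    simp only [] at h
    rwa [hwsE _ hC, hwsE _ hD] at h
  · intro r c m hC hD
    have h := hstds.2 r c m hC hD
    simp only [] at h
    rwa [hwsE _ hC, hwsE _ hD] at h

end FS
end

section
/- Let λ, μ ∈ 𝒫^l_n, let 1 ≤ j ≤ n and let s ∈ Std(μ). Then s is λ-column-dominated on 1,…,j if and only if Shape(t_λ↓m) ⊵ Shape(s↓m) for all m = 1,…,j. -/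
namespace FS

open scoped Classical

section Aux
open Finset

variable {l n : ℕ} {p : ℕ → ℕ → ℕ}

lemma part_anti (hp : IsMP l n p) (m : ℕ) {a b : ℕ} (ha : 1 ≤ a) (hab : a ≤ b) :
    p m b ≤ p m a := by
  induction b, hab using Nat.le_induction with
  | base => exact le_refl _
  | succ b hb ih => exact le_trans (hp.2.1 m b (le_trans ha hb)) ih

lemma part_le_n (hp : IsMP l n p) {m r : ℕ} (hm1 : 1 ≤ m) (hm2 : m ≤ l)
    (hr1 : 1 ≤ r) (hr2 : r ≤ n) : p m r ≤ n := by
  have h1 : p m r ≤ ∑ r' ∈ Icc 1 n, p m r' :=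
    Finset.single_le_sum (fun _ _ => Nat.zero_le _) (by simp [mem_Icc]; omega)
  have h2 : (∑ r' ∈ Icc 1 n, p m r') ≤ ∑ m' ∈ Icc 1 l, ∑ r' ∈ Icc 1 n, p m' r' :=
    Finset.single_le_sum (f := fun m' => ∑ r' ∈ Icc 1 n, p m' r')
      (fun _ _ => Nat.zero_le _) (by simp [mem_Icc]; omega)
  rw [hp.2.2] at h2
  omega

lemma indiag_bounds (hp : IsMP l n p) {r c m : ℕ} (h : InDiag p (r, c, m)) :
    1 ≤ m ∧ m ≤ l ∧ 1 ≤ r ∧ r ≤ n ∧ 1 ≤ c ∧ c ≤ p m r ∧ p m r ≤ n := by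
  obtain ⟨hc1, hc2⟩ := h
  have hpos : 1 ≤ p m r := le_trans hc1 hc2
  have hrange : ¬(m = 0 ∨ l < m ∨ r = 0 ∨ n < r) := fun hor => by
    simp [hp.1 m r hor] at hpos
  push_neg at hrange
  obtain ⟨h1, h2, h3, h4⟩ := hrange
  have := part_le_n hp (m := m) (r := r) (by omega) (by omega) (by omega) (by omega)
  exact ⟨by omega, by omega, by omega, by omega, hc1, hc2, this⟩

lemma indiag_mono (hp : IsMP l n p) {r c m r' c' : ℕ} (h : InDiag p (r, c, m))
    (hr1 : 1 ≤ r') (hr : r' ≤ r) (hc1 : 1 ≤ c') (hc : c' ≤ c) :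
    InDiag p (r', c', m) :=
  ⟨hc1, le_trans (le_trans hc h.2) (part_anti hp m hr1 hr)⟩

lemma le_colLen (hp : IsMP l n p) {r c m : ℕ} (h : InDiag p (r, c, m)) :
    r ≤ colLen n p m c := by
  have hb := indiag_bounds hp h
  have hsub : Icc 1 r ⊆ (Icc 1 n).filter fun r' => c ≤ p m r' := by
    intro x hx
    simp only [mem_Icc, mem_filter] at hx ⊢
    exact ⟨⟨hx.1, by omega⟩, le_trans h.2 (part_anti hp m hx.1 hx.2)⟩
  have := card_le_card hsub
  simpa [colLen] using this

lemma sum_colLen (hp : IsMP l n p) {m : ℕ} (hm1 : 1 ≤ m) (hm2 : m ≤ l) :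
    ∑ c ∈ Icc 1 n, colLen n p m c = compSize n p m := by
  unfold colLen compSize
  calc ∑ c ∈ Icc 1 n, ((Icc 1 n).filter fun r => c ≤ p m r).card
      = ∑ c ∈ Icc 1 n, ∑ r ∈ Icc 1 n, if c ≤ p m r then 1 else 0 := by
        refine Finset.sum_congr rfl fun c _ => ?_
        rw [Finset.card_filter]
    _ = ∑ r ∈ Icc 1 n, ∑ c ∈ Icc 1 n, if c ≤ p m r then 1 else 0 := Finset.sum_comm
    _ = ∑ r ∈ Icc 1 n, p m r := by
        refine Finset.sum_congr rfl fun r hr => ?_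
        simp only [mem_Icc] at hr
        rw [← Finset.card_filter]
        have : (Icc 1 n).filter (fun c => c ≤ p m r) = Icc 1 (p m r) := by
          ext c
          simp only [mem_filter, mem_Icc]
          have := part_le_n hp hm1 hm2 hr.1 hr.2
          omega
        rw [this, Nat.card_Icc]
        omega

end Aux

section ColTab
open Finset

/-- Offset: number of entries in components after `m`. -/
def offC (l n : ℕ) (p : ℕ → ℕ → ℕ) (m : ℕ) : ℕ := ∑ m' ∈ Icc (m + 1) l, compSize n p m'

/-- Number of entries in columns before `c` of component `m`. -/
def colS (n : ℕ) (p : ℕ → ℕ → ℕ) (m c : ℕ) : ℕ := ∑ c' ∈ Icc 1 (c - 1), colLen n p m c'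

variable {l n : ℕ} {p : ℕ → ℕ → ℕ}

lemma colTab_eq (r c m : ℕ) : colTab l n p (r, c, m) = offC l n p m + colS n p m c + r := rfl

lemma colS_succ (hc : 1 ≤ c) : colS n p m (c + 1) = colS n p m c + colLen n p m c := by
  unfold colS
  have h1 : Icc 1 (c + 1 - 1) = insert c (Icc 1 (c - 1)) := by
    ext x; simp only [mem_Icc, mem_insert]; omega
  rw [h1, Finset.sum_insert (by intro hmem; simp only [mem_Icc] at hmem; omega)]
  omega

lemma colS_mono {c c' : ℕ} (h : c ≤ c') : colS n p m c ≤ colS n p m c' :=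
  Finset.sum_le_sum_of_subset (Finset.Icc_subset_Icc_right (by omega))

lemma colS_le_comp (hp : IsMP l n p) {m c : ℕ} (hm1 : 1 ≤ m) (hm2 : m ≤ l) (hc : c ≤ n + 1) :
    colS n p m c ≤ compSize n p m := by
  calc colS n p m c ≤ colS n p m (n + 1) := colS_mono (by omega)
    _ = ∑ c' ∈ Icc 1 n, colLen n p m c' := by unfold colS; congr 1
    _ = compSize n p m := sum_colLen hp hm1 hm2

lemma offC_pred (hm1 : 1 ≤ m) (hm2 : m ≤ l) :
    offC l n p (m - 1) = compSize n p m + offC l n p m := by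
  unfold offC
  have h1 : Icc (m - 1 + 1) l = insert m (Icc (m + 1) l) := by
    ext x; simp only [mem_Icc, mem_insert]; omega
  rw [h1, Finset.sum_insert (by simp [mem_Icc])]

lemma offC_anti {m m' : ℕ} (h : m ≤ m') : offC l n p m' ≤ offC l n p m :=
  Finset.sum_le_sum_of_subset (Finset.Icc_subset_Icc_left (by omega))

lemma offC_zero (hp : IsMP l n p) : offC l n p 0 = n := by
  unfold offC compSize
  exact hp.2.2

lemma colTab_upper (hp : IsMP l n p) {r c m : ℕ} (h : InDiag p (r, c, m)) :
    colTab l n p (r, c, m) ≤ offC l n p m + compSize n p m := by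
  have hb := indiag_bounds hp h
  have h1 : r ≤ colLen n p m c := le_colLen hp h
  have h2 : colS n p m c + colLen n p m c = colS n p m (c + 1) := (colS_succ (by omega)).symm
  have h3 : colS n p m (c + 1) ≤ compSize n p m :=
    colS_le_comp hp (by omega) (by omega) (by omega)
  rw [colTab_eq]
  omega

lemma colTab_lower {r c m : ℕ} : offC l n p m + r ≤ colTab l n p (r, c, m) := by
  rw [colTab_eq]; omega

lemma colTab_le_n (hp : IsMP l n p) {r c m : ℕ} (h : InDiag p (r, c, m)) :
    1 ≤ colTab l n p (r, c, m) ∧ colTab l n p (r, c, m) ≤ n := by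
  have hb := indiag_bounds hp h
  have h1 := colTab_upper hp h
  have h2 : offC l n p (m - 1) = compSize n p m + offC l n p m := offC_pred (by omega) (by omega)
  have h3 : offC l n p (m - 1) ≤ offC l n p 0 := offC_anti (by omega)
  have h4 := offC_zero hp
  have h5 := colTab_lower (l := l) (n := n) (p := p) (r := r) (c := c) (m := m)
  omega

/-- Entries in a lower-indexed component are larger. -/
lemma colTab_comp_lt (hp : IsMP l n p) {r c m r' c' m' : ℕ}
    (h : InDiag p (r, c, m)) (h' : InDiag p (r', c', m')) (hmm : m < m') :
    colTab l n p (r', c', m') < colTab l n p (r, c, m) := by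
  have hb := indiag_bounds hp h
  have hb' := indiag_bounds hp h'
  have h1 := colTab_upper hp h'
  have h2 : offC l n p (m' - 1) = compSize n p m' + offC l n p m' := offC_pred (by omega) (by omega)
  have h3 : offC l n p (m' - 1) ≤ offC l n p m := offC_anti (by omega)
  have h4 := colTab_lower (l := l) (n := n) (p := p) (r := r) (c := c) (m := m)
  omega

/-- Within a component, entries in an earlier column are smaller. -/
lemma colTab_col_lt (hp : IsMP l n p) {r c r' c' m : ℕ}
    (h : InDiag p (r, c, m)) (h' : InDiag p (r', c', m)) (hcc : c < c') :
    colTab l n p (r, c, m) < colTab l n p (r', c', m) := by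
  have hb := indiag_bounds hp h
  have h1 : r ≤ colLen n p m c := le_colLen hp h
  have h2 : colS n p m c + colLen n p m c = colS n p m (c + 1) := (colS_succ (by omega)).symm
  have h3 : colS n p m (c + 1) ≤ colS n p m c' := colS_mono (by omega)
  have hb' := indiag_bounds hp h'
  rw [colTab_eq, colTab_eq]
  omega

lemma colTab_inj (hp : IsMP l n p) {A B : Node} (hA : InDiag p A) (hB : InDiag p B)
    (hAB : colTab l n p A = colTab l n p B) : A = B := by
  obtain ⟨r, c, m⟩ := A
  obtain ⟨r', c', m'⟩ := B
  have hm : m = m' := by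
    rcases Nat.lt_trichotomy m m' with h | h | h
    · exact absurd hAB (by have := colTab_comp_lt hp hA hB h; omega)
    · exact h
    · exact absurd hAB (by have := colTab_comp_lt hp hB hA h; omega)
  subst hm
  have hc : c = c' := by
    rcases Nat.lt_trichotomy c c' with h | h | h
    · exact absurd hAB (by have := colTab_col_lt hp hA hB h; omega)
    · exact h
    · exact absurd hAB (by have := colTab_col_lt hp hB hA h; omega)
  subst hc
  rw [colTab_eq, colTab_eq] at hAB
  have hr : r = r' := by omega
  subst hr
  rfl

lemma downclosed_mem {n : ℕ} {F : Finset ℕ} (hF : F ⊆ Icc 1 n)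
    (hdc : ∀ x y, x ∈ F → 1 ≤ y → y ≤ x → y ∈ F) {r : ℕ} (h1 : 1 ≤ r) (h2 : r ≤ F.card) :
    r ∈ F := by
  by_contra hr
  have hsub : F ⊆ Icc 1 (r - 1) := by
    intro x hx
    have hx1 := hF hx
    simp only [mem_Icc] at hx1 ⊢
    refine ⟨hx1.1, ?_⟩
    by_contra hlt
    exact hr (hdc x r hx h1 (by omega))
  have := card_le_card hsub
  rw [Nat.card_Icc] at this
  omega

lemma nat_ivt_anti {g : ℕ → ℕ} {i b : ℕ} (hb : g b < i) (h0 : i ≤ g 0) :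
    ∃ m, 1 ≤ m ∧ m ≤ b ∧ g m < i ∧ i ≤ g (m - 1) := by
  induction b with
  | zero => omega
  | succ b ih =>
    by_cases h : g b < i
    · obtain ⟨m, hm1, hm2, hm3, hm4⟩ := ih h
      exact ⟨m, hm1, by omega, hm3, hm4⟩
    · exact ⟨b + 1, by omega, le_refl _, hb, by simpa using (by omega : i ≤ g b)⟩

lemma nat_ivt_mono {g : ℕ → ℕ} {v b : ℕ} (hb : v ≤ g b) (h0 : g 0 < v) :
    ∃ c, 1 ≤ c ∧ c ≤ b ∧ g (c - 1) < v ∧ v ≤ g c := by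
  induction b with
  | zero => omega
  | succ b ih =>
    by_cases h : v ≤ g b
    · obtain ⟨c, hc1, hc2, hc3, hc4⟩ := ih h
      exact ⟨c, hc1, by omega, hc3, hc4⟩
    · exact ⟨b + 1, by omega, le_refl _, by simpa using (by omega : g b < v), hb⟩

lemma colTab_surj (hp : IsMP l n p) {i : ℕ} (hi1 : 1 ≤ i) (hi2 : i ≤ n) :
    ∃ A, InDiag p A ∧ colTab l n p A = i := by
  have hPl : offC l n p l < i := by
    unfold offC
    rw [Finset.Icc_eq_empty (by omega)]
    simpa using (show 0 < i by omega)
  have h0 : i ≤ offC l n p 0 := by rw [offC_zero hp]; exact hi2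
  obtain ⟨m, hm1, hml, hPm, hPm'⟩ := nat_ivt_anti hPl h0
  rw [offC_pred hm1 hml] at hPm'
  set v := i - offC l n p m with hv_def
  have hv1 : 1 ≤ v := by omega
  have hv2 : v ≤ compSize n p m := by omega
  -- find the column
  have hQn : v ≤ colS n p m (n + 1) := by
    have : colS n p m (n + 1) = compSize n p m := by
      unfold colS
      rw [Nat.add_sub_cancel]
      exact sum_colLen hp hm1 hml
    omega
  have hQ0 : colS n p m (0 + 1) < v := by
    have : colS n p m (0 + 1) = 0 := by unfold colS; simp
    omega
  obtain ⟨c, hc1, hcn, hQc', hQc⟩ := nat_ivt_mono (g := fun k => colS n p m (k + 1)) hQn hQ0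
  rw [show c - 1 + 1 = c by omega] at hQc'
  rw [colS_succ hc1] at hQc
  -- the row
  set r := v - colS n p m c with hr_def
  have hr1 : 1 ≤ r := by omega
  have hr2 : r ≤ colLen n p m c := by omega
  have hrmem : r ∈ (Icc 1 n).filter fun r' => c ≤ p m r' := by
    refine downclosed_mem (filter_subset _ _) ?_ hr1 hr2
    intro x y hx hy1 hyx
    simp only [mem_filter, mem_Icc] at hx ⊢
    exact ⟨⟨hy1, by omega⟩, le_trans hx.2 (part_anti hp m hy1 hyx)⟩
  simp only [mem_filter, mem_Icc] at hrmem
  refine ⟨(r, c, m), ⟨hc1, hrmem.2⟩, ?_⟩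
  rw [colTab_eq]
  omega

end ColTab

section Count
open Finset

/-- Number of diagram nodes with entry at most `i` satisfying `Q`. -/
noncomputable def Nd (l n : ℕ) (p : ℕ → ℕ → ℕ) (x : Node → ℕ) (i : ℕ) (Q : Node → Prop) : ℕ :=
  ((Icc 1 l ×ˢ Icc 1 n ×ˢ Icc 1 n).filter fun z =>
    z.2.2 ≤ p z.1 z.2.1 ∧ x (z.2.1, z.2.2, z.1) ≤ i ∧ Q (z.2.1, z.2.2, z.1)).card

variable {l n : ℕ} {p : ℕ → ℕ → ℕ} {x : Node → ℕ} {i : ℕ}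

lemma Nd_eq_Ent (hp : IsMP l n p)
    (hinj : ∀ A B, InDiag p A → InDiag p B → x A = x B → A = B)
    (hpos : ∀ A, InDiag p A → 1 ≤ x A)
    (Q : Node → Prop) :
    Nd l n p x i Q
      = ((Icc 1 i).filter fun i' => ∃ A, InDiag p A ∧ x A = i' ∧ Q A).card := by
  unfold Nd
  refine Finset.card_bij (fun z _ => x (z.2.1, z.2.2, z.1)) ?_ ?_ ?_
  · intro z hz
    simp only [mem_filter, mem_product, mem_Icc] at hz
    obtain ⟨⟨hm, hr, hc⟩, hd, hxi, hQ⟩ := hz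
    have hdiag : InDiag p (z.2.1, z.2.2, z.1) := ⟨hc.1, hd⟩
    simp only [mem_filter, mem_Icc]
    exact ⟨⟨hpos _ hdiag, hxi⟩, ⟨_, hdiag, rfl, hQ⟩⟩
  · intro z1 h1 z2 h2 heq
    simp only [mem_filter, mem_product, mem_Icc] at h1 h2
    have hd1 : InDiag p (z1.2.1, z1.2.2, z1.1) := ⟨h1.1.2.2.1, h1.2.1⟩
    have hd2 : InDiag p (z2.2.1, z2.2.2, z2.1) := ⟨h2.1.2.2.1, h2.2.1⟩
    have := hinj _ _ hd1 hd2 heq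
    obtain ⟨m1, r1, c1⟩ := z1
    obtain ⟨m2, r2, c2⟩ := z2
    simp only [Prod.mk.injEq] at this ⊢
    tauto
  · intro b hb
    simp only [mem_filter, mem_Icc] at hb
    obtain ⟨⟨hb1, hb2⟩, A, hA, hxA, hQA⟩ := hb
    obtain ⟨r, c, m⟩ := A
    have hbd := indiag_bounds hp hA
    refine ⟨(m, r, c), ?_, hxA⟩
    simp only [mem_filter, mem_product, mem_Icc]
    exact ⟨⟨⟨hbd.1, hbd.2.1⟩, ⟨hbd.2.2.1, hbd.2.2.2.1⟩, ⟨hbd.2.2.2.2.1, by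
      have := hbd.2.2.2.2.2; omega⟩⟩, hA.2, by omega, hQA⟩

lemma Nd_true (hp : IsMP l n p)
    (hinj : ∀ A B, InDiag p A → InDiag p B → x A = x B → A = B)
    (hpos : ∀ A, InDiag p A → 1 ≤ x A)
    (hsurj : ∀ i', 1 ≤ i' → i' ≤ n → ∃ A, InDiag p A ∧ x A = i')
    (hi : i ≤ n) :
    Nd l n p x i (fun _ => True) = i := by
  rw [Nd_eq_Ent hp hinj hpos]
  rw [Finset.filter_true_of_mem, Nat.card_Icc]
  · omega
  · intro i' hi'
    simp only [mem_Icc] at hi'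
    obtain ⟨A, hA, hxA⟩ := hsurj i' hi'.1 (by omega)
    exact ⟨A, hA, hxA, trivial⟩

lemma Nd_mono {Q R : Node → Prop}
    (h : ∀ A, InDiag p A → x A ≤ i → Q A → R A) :
    Nd l n p x i Q ≤ Nd l n p x i R := by
  unfold Nd
  apply card_le_card
  intro z hz
  simp only [mem_filter, mem_product, mem_Icc] at hz ⊢
  exact ⟨hz.1, hz.2.1, hz.2.2.1, h _ ⟨hz.1.2.2.1, hz.2.1⟩ hz.2.2.1 hz.2.2.2⟩

lemma Nd_split (Q R : Node → Prop) :
    Nd l n p x i (fun A => Q A ∧ R A) + Nd l n p x i (fun A => Q A ∧ ¬ R A)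
      = Nd l n p x i Q := by
  classical
  unfold Nd
  rw [Finset.card_filter, Finset.card_filter, Finset.card_filter,
    ← Finset.sum_add_distrib]
  refine Finset.sum_congr rfl fun z _ => ?_
  by_cases hQ : Q (z.2.1, z.2.2, z.1) <;> by_cases hR : R (z.2.1, z.2.2, z.1) <;>
    by_cases hD : z.2.2 ≤ p z.1 z.2.1 <;>
    by_cases hX : x (z.2.1, z.2.2, z.1) ≤ i <;>
    simp [hQ, hR, hD, hX]

lemma shape_eq_zero {m r : ℕ} (h : p m r = 0) : shape n p x i m r = 0 := by
  unfold shape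
  rw [Finset.card_eq_zero, Finset.filter_eq_empty_iff]
  intro c hc
  simp only [mem_Icc] at hc
  omega

/-- The dominance-order partial sum equals a node count. -/
lemma dsum_eq_Nd (hp : IsMP l n p) {m0 : ℕ} (hm1 : 1 ≤ m0) (hm2 : m0 ≤ l) (r0 : ℕ) :
    (∑ m' ∈ Icc 1 (m0 - 1), compSize n (shape n p x i) m') +
        ∑ r' ∈ Icc 1 r0, shape n p x i m0 r'
      = Nd l n p x i (fun A => A.2.2 < m0 ∨ (A.2.2 = m0 ∧ A.1 ≤ r0)) := by
  classical
  have step1 : Nd l n p x i (fun A => A.2.2 < m0 ∨ (A.2.2 = m0 ∧ A.1 ≤ r0))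
      = ∑ m ∈ Icc 1 l,
          (if m < m0 then compSize n (shape n p x i) m
            else if m = m0 then ∑ r ∈ Icc 1 n, (if r ≤ r0 then shape n p x i m0 r else 0)
            else 0) := by
    unfold Nd
    rw [Finset.card_filter, Finset.sum_product]
    refine Finset.sum_congr rfl fun m hm => ?_
    rw [Finset.sum_product]
    dsimp only
    by_cases h1 : m < m0
    · rw [if_pos h1]
      unfold compSize
      refine Finset.sum_congr rfl fun r _ => ?_
      unfold shape
      rw [Finset.card_filter]
      refine Finset.sum_congr rfl fun c _ => ?_
      split_ifs <;> first | rfl | tauto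
    · rw [if_neg h1]
      by_cases h2 : m = m0
      · subst h2
        rw [if_pos rfl]
        refine Finset.sum_congr rfl fun r _ => ?_
        by_cases h3 : r ≤ r0
        · rw [if_pos h3]
          unfold shape
          rw [Finset.card_filter]
          refine Finset.sum_congr rfl fun c _ => ?_
          split_ifs <;> first | rfl | tauto
        · rw [if_neg h3]
          refine Finset.sum_eq_zero fun c _ => ?_
          rw [if_neg (by tauto)]
      · rw [if_neg h2]
        refine Finset.sum_eq_zero fun r _ => Finset.sum_eq_zero fun c _ => ?_
        rw [if_neg (by tauto)]
  have hsplit : (∑ m ∈ Icc 1 l,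
      (if m < m0 then compSize n (shape n p x i) m
        else if m = m0 then ∑ r ∈ Icc 1 n, (if r ≤ r0 then shape n p x i m0 r else 0)
        else 0))
      = (∑ m' ∈ Icc 1 (m0 - 1), compSize n (shape n p x i) m') +
        ∑ r ∈ Icc 1 n, (if r ≤ r0 then shape n p x i m0 r else 0) := by
    rw [← Finset.Ico_add_one_right_eq_Icc 1 l, ← Finset.sum_Ico_consecutive _ (by omega : 1 ≤ m0)
      (by omega : m0 ≤ l + 1)]
    rw [Finset.sum_eq_sum_Ico_succ_bot (by omega : m0 < l + 1)]
    have e1 : ∀ m ∈ Ico 1 m0, (if m < m0 then compSize n (shape n p x i) m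
        else if m = m0 then ∑ r ∈ Icc 1 n, (if r ≤ r0 then shape n p x i m0 r else 0)
        else 0) = compSize n (shape n p x i) m := by
      intro m hm
      simp only [mem_Ico] at hm
      rw [if_pos hm.2]
    have e2 : ∀ m ∈ Ico (m0 + 1) (l + 1), (if m < m0 then compSize n (shape n p x i) m
        else if m = m0 then ∑ r ∈ Icc 1 n, (if r ≤ r0 then shape n p x i m0 r else 0)
        else 0) = 0 := by
      intro m hm
      simp only [mem_Ico] at hm
      rw [if_neg (by omega), if_neg (by omega)]
    rw [Finset.sum_congr rfl e1, Finset.sum_congr rfl e2, Finset.sum_const_zero,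
      if_neg (by omega : ¬ m0 < m0), if_pos rfl]
    have e3 : Ico 1 m0 = Icc 1 (m0 - 1) := by
      ext y; simp only [mem_Ico, mem_Icc]; omega
    rw [e3]
    have e4 : ((Icc 1 (m0 - 1)).sum (compSize n (shape n p x i)))
        = ∑ m' ∈ Icc 1 (m0 - 1), compSize n (shape n p x i) m' := rfl
    omega
  have hrows : (∑ r ∈ Icc 1 n, (if r ≤ r0 then shape n p x i m0 r else 0))
      = ∑ r' ∈ Icc 1 r0, shape n p x i m0 r' := by
    rw [← Finset.sum_filter]
    by_cases hr0 : r0 ≤ n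
    · have : (Icc 1 n).filter (fun r => r ≤ r0) = Icc 1 r0 := by
        ext y; simp only [mem_filter, mem_Icc]; omega
      rw [this]
    · have h1 : (Icc 1 n).filter (fun r => r ≤ r0) = Icc 1 n := by
        ext y; simp only [mem_filter, mem_Icc]; omega
      rw [h1, ← Finset.Ico_add_one_right_eq_Icc 1 r0, ← Finset.sum_Ico_consecutive _
        (by omega : 1 ≤ n + 1) (by omega : n + 1 ≤ r0 + 1)]
      have h2 : ∀ r ∈ Ico (n + 1) (r0 + 1), shape n p x i m0 r = 0 := by
        intro r hr
        simp only [mem_Ico] at hr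
        exact shape_eq_zero (hp.1 m0 r (by omega))
      rw [Finset.sum_congr rfl h2, Finset.sum_const_zero, Finset.Ico_add_one_right_eq_Icc]
      omega
  rw [step1, hsplit, hrows]

end Count

section Backward
open Finset

variable {l n : ℕ} {mu lam : ℕ → ℕ → ℕ} {s : Node → ℕ}

lemma entry_mono_row (hmu : IsMP l n mu) (hcs : ColStrict mu s) {r r' c m : ℕ}
    (h1 : 1 ≤ r) (hrr : r ≤ r') (hd : InDiag mu (r', c, m)) :
    s (r, c, m) ≤ s (r', c, m) := by
  induction r', hrr using Nat.le_induction with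
  | base => exact le_refl _
  | succ r'' hr'' ih =>
    have hd' : InDiag mu (r'', c, m) := by
      have hb := indiag_bounds hmu hd
      exact indiag_mono hmu hd (by omega) (by omega) (by omega) (by omega)
    exact le_trans (ih hd') (le_of_lt (hcs r'' c m hd' hd))

lemma entry_mono_col (hmu : IsMP l n mu) (hrs : RowStrict mu s) {r c c' m : ℕ}
    (h1 : 1 ≤ c) (hcc : c ≤ c') (hd : InDiag mu (r, c', m)) :
    s (r, c, m) ≤ s (r, c', m) := by
  induction c', hcc using Nat.le_induction with
  | base => exact le_refl _
  | succ c'' hc'' ih =>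
    have hd' : InDiag mu (r, c'', m) := by
      have hb := indiag_bounds hmu hd
      exact indiag_mono hmu hd (by omega) (by omega) (by omega) (by omega)
    exact le_trans (ih hd') (le_of_lt (hrs r c'' m hd' hd))

/-- `t_λ` entries in components before `m0` exceed any entry of component `m0`. -/
lemma colTab_small_comp_big (hlam : IsMP l n lam) {rB cB mB : ℕ}
    (hB : InDiag lam (rB, cB, mB)) {r c m' : ℕ} (hm' : m' < mB)
    (hd : InDiag lam (r, c, m')) :
    colTab l n lam (rB, cB, mB) < colTab l n lam (r, c, m') :=
  colTab_comp_lt hlam hd hB hm'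

lemma dom_colDom (hl : 1 ≤ l) (hn : 1 ≤ n) (hlam : IsMP l n lam) (hmu : IsMP l n mu)
    {j : ℕ} (hj2 : j ≤ n) (hs : IsTab n mu s) (hstd : IsStd mu s)
    (hdom : ∀ m, 1 ≤ m → m ≤ j →
      Dom l n (shape n lam (colTab l n lam) m) (shape n mu s m)) :
    ColDomOn l n lam mu s j := by
  intro i A B hi1 hij hA hsA hB hTB
  obtain ⟨rA, cA, mA⟩ := A
  obtain ⟨rB, cB, mB⟩ := B
  by_contra hnw
  unfold WeaklyLeft at hnw
  push_neg at hnw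
  simp only at hnw
  obtain ⟨hm1, hm2⟩ := hnw
  have hbA := indiag_bounds hmu hA
  have hbB := indiag_bounds hlam hB
  have hDom := hdom i hi1 hij
  -- entries of t_lam in components ≤ mB - 1 are > i
  have hbig : ∀ m' r c, m' < mB → InDiag lam (r, c, m') → ¬ colTab l n lam (r, c, m') ≤ i := by
    intro m' r c hm' hd
    have h1 := colTab_comp_lt hlam hd hB hm'
    omega
  have hshape0 : ∀ m' r, m' < mB → shape n lam (colTab l n lam) i m' r = 0 := by
    intro m' r hm'
    unfold shape
    rw [Finset.card_eq_zero, Finset.filter_eq_empty_iff]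
    intro c hc
    simp only [mem_Icc] at hc
    intro hcon
    exact hbig m' r c hm' ⟨hc.1, hcon.1⟩ hcon.2
  rcases Nat.lt_or_ge mA mB with hcase | hcase
  · -- component of A strictly smaller than component of B : contradiction
    have hD := hDom mA n (by omega) (by omega)
    have hp0 : (∑ m' ∈ Icc 1 (mA - 1), compSize n (shape n lam (colTab l n lam) i) m') +
        ∑ r' ∈ Icc 1 n, shape n lam (colTab l n lam) i mA r' = 0 := by
      have e1 : ∀ m' ∈ Icc 1 (mA - 1), compSize n (shape n lam (colTab l n lam) i) m' = 0 := by
        intro m' hm'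
        simp only [mem_Icc] at hm'
        exact Finset.sum_eq_zero fun r _ => hshape0 m' r (by omega)
      have e2 : ∀ r ∈ Icc 1 n, shape n lam (colTab l n lam) i mA r = 0 :=
        fun r _ => hshape0 mA r (by omega)
      rw [Finset.sum_congr rfl e1, Finset.sum_congr rfl e2, Finset.sum_const_zero,
        Finset.sum_const_zero]
      rfl
    have hq1 : 1 ≤ ∑ r' ∈ Icc 1 n, shape n mu s i mA r' := by
      have hmem : cA ∈ (Icc 1 n).filter fun c => c ≤ mu mA rA ∧ s (rA, c, mA) ≤ i := by
        simp only [mem_filter, mem_Icc]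
        exact ⟨⟨by omega, by omega⟩, by omega, by omega⟩
      have h1 : 1 ≤ shape n mu s i mA rA := by
        unfold shape
        exact Finset.card_pos.2 ⟨cA, hmem⟩
      calc 1 ≤ shape n mu s i mA rA := h1
        _ ≤ ∑ r' ∈ Icc 1 n, shape n mu s i mA r' :=
          Finset.single_le_sum (fun _ _ => Nat.zero_le _) (by simp [mem_Icc]; omega)
    omega
  · -- same component, but A strictly to the right of B : contradiction
    have hmAB : mA = mB := by omega
    subst hmAB
    have hcc : cB < cA := hm2 rfl
    have hD := hDom mA rA (by omega) (by omega)
    -- lower bound for the mu-side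
    have hq : rA * cA ≤ ∑ r' ∈ Icc 1 rA, shape n mu s i mA r' := by
      have hterm : ∀ r ∈ Icc 1 rA, cA ≤ shape n mu s i mA r := by
        intro r hr
        simp only [mem_Icc] at hr
        have hsub : Icc 1 cA ⊆ (Icc 1 n).filter fun c => c ≤ mu mA r ∧ s (r, c, mA) ≤ i := by
          intro c hc
          simp only [mem_Icc] at hc
          simp only [mem_filter, mem_Icc]
          have hdc : InDiag mu (r, c, mA) := indiag_mono hmu hA hr.1 hr.2 hc.1 hc.2
          have hdca : InDiag mu (r, cA, mA) := indiag_mono hmu hA hr.1 hr.2 (by omega) (le_refl _)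
          have hch1 : s (r, c, mA) ≤ s (r, cA, mA) := entry_mono_col hmu hstd.1 hc.1 hc.2 hdca
          have hch2 : s (r, cA, mA) ≤ s (rA, cA, mA) := entry_mono_row hmu hstd.2 hr.1 hr.2 hA
          exact ⟨⟨hc.1, by omega⟩, hdc.2, by omega⟩
        have := card_le_card hsub
        unfold shape
        simpa using this
      calc rA * cA = ∑ _r ∈ Icc 1 rA, cA := by
            rw [Finset.sum_const, Nat.card_Icc, smul_eq_mul, Nat.add_sub_cancel]
        _ ≤ ∑ r' ∈ Icc 1 rA, shape n mu s i mA r' := Finset.sum_le_sum hterm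
    -- upper bound for the lam-side
    have hp : (∑ r' ∈ Icc 1 rA, shape n lam (colTab l n lam) i mA r') ≤ rA * cB := by
      have hterm : ∀ r ∈ Icc 1 rA, shape n lam (colTab l n lam) i mA r ≤ cB := by
        intro r hr
        simp only [mem_Icc] at hr
        have hsub : ((Icc 1 n).filter fun c => c ≤ lam mA r ∧ colTab l n lam (r, c, mA) ≤ i)
            ⊆ Icc 1 cB := by
          intro c hc
          simp only [mem_filter, mem_Icc] at hc
          obtain ⟨⟨hc1, hc2⟩, hc3, hc4⟩ := hc
          simp only [mem_Icc]
          refine ⟨hc1, ?_⟩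
          by_contra hcon
          have hgt : cB + 1 ≤ c := by omega
          have h1 : colS n lam mA (cB + 1) ≤ colS n lam mA c := colS_mono hgt
          have h2 : colS n lam mA (cB + 1) = colS n lam mA cB + colLen n lam mA cB :=
            colS_succ (by omega)
          have h3 : rB ≤ colLen n lam mA cB := le_colLen hlam hB
          have h4 := colTab_eq (l := l) (n := n) (p := lam) r c mA
          have h5 := colTab_eq (l := l) (n := n) (p := lam) rB cB mA
          omega
        have := card_le_card hsub
        unfold shape
        simpa using this
      calc (∑ r' ∈ Icc 1 rA, shape n lam (colTab l n lam) i mA r')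
          ≤ ∑ _r ∈ Icc 1 rA, cB := Finset.sum_le_sum hterm
        _ = rA * cB := by
            rw [Finset.sum_const, Nat.card_Icc, smul_eq_mul, Nat.add_sub_cancel]
    have hp0 : ∀ m' ∈ Icc 1 (mA - 1), compSize n (shape n lam (colTab l n lam) i) m' = 0 := by
      intro m' hm'
      simp only [mem_Icc] at hm'
      exact Finset.sum_eq_zero fun r _ => hshape0 m' r (by omega)
    rw [Finset.sum_congr rfl hp0, Finset.sum_const_zero] at hD
    have hfinal : rA * cA ≤ rA * cB := by omega
    have : cA ≤ cB := Nat.le_of_mul_le_mul_left hfinal (by omega)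
    omega

end Backward

section Forward
open Finset

/-- The region predicate for the dominance partial sums. -/
def QRp (m0 r0 : ℕ) : Node → Prop := fun A => A.2.2 < m0 ∨ (A.2.2 = m0 ∧ A.1 ≤ r0)

/-- The left-closed region predicate. -/
def QLp (m0 c1 : ℕ) : Node → Prop := fun A => m0 < A.2.2 ∨ (A.2.2 = m0 ∧ A.2.1 ≤ c1)

/-- Height of column `c` of component `m0` in `Shape(t_λ↓i)`. -/
noncomputable def colHt (l n : ℕ) (lam : ℕ → ℕ → ℕ) (i m0 c : ℕ) : ℕ :=
  ((Icc 1 n).filter fun r => c ≤ lam m0 r ∧ colTab l n lam (r, c, m0) ≤ i).card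

/-- Number of columns of component `m0` of `Shape(t_λ↓i)` with more than `r0` rows. -/
noncomputable def cCut (l n : ℕ) (lam : ℕ → ℕ → ℕ) (i m0 r0 : ℕ) : ℕ :=
  ((Icc 1 n).filter fun c => r0 < colHt l n lam i m0 c).card

variable {l n : ℕ} {lam mu p : ℕ → ℕ → ℕ} {s x : Node → ℕ} {i j m0 r0 : ℕ}

lemma Nd_congr {Q R : Node → Prop} (h : ∀ A, Q A ↔ R A) :
    Nd l n p x i Q = Nd l n p x i R :=
  le_antisymm (Nd_mono fun A _ _ hq => (h A).1 hq) (Nd_mono fun A _ _ hq => (h A).2 hq)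

lemma Nd_ge {Q : Node → Prop} (S : Finset (ℕ × ℕ × ℕ))
    (hS : ∀ z ∈ S, z ∈ Icc 1 l ×ˢ Icc 1 n ×ˢ Icc 1 n ∧ z.2.2 ≤ p z.1 z.2.1 ∧
      x (z.2.1, z.2.2, z.1) ≤ i ∧ Q (z.2.1, z.2.2, z.1)) :
    S.card ≤ Nd l n p x i Q := by
  unfold Nd
  apply card_le_card
  intro z hz
  rw [mem_filter]
  exact ⟨(hS z hz).1, (hS z hz).2⟩

lemma Nd_le {Q : Node → Prop} (S : Finset (ℕ × ℕ × ℕ))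
    (hS : ∀ z, z ∈ Icc 1 l ×ˢ Icc 1 n ×ˢ Icc 1 n →
      z.2.2 ≤ p z.1 z.2.1 ∧ x (z.2.1, z.2.2, z.1) ≤ i ∧ Q (z.2.1, z.2.2, z.1) → z ∈ S) :
    Nd l n p x i Q ≤ S.card := by
  unfold Nd
  apply card_le_card
  intro z hz
  rw [mem_filter] at hz
  exact hS z hz.1 hz.2

lemma colHt_anti (hlam : IsMP l n lam) {c c' : ℕ} (h1 : 1 ≤ c) (hcc : c ≤ c') :
    colHt l n lam i m0 c' ≤ colHt l n lam i m0 c := by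
  apply card_le_card
  intro r hr
  simp only [mem_filter, mem_Icc] at hr ⊢
  have e1 := colTab_eq (l := l) (n := n) (p := lam) r c m0
  have e2 := colTab_eq (l := l) (n := n) (p := lam) r c' m0
  have e3 := colS_mono (n := n) (p := lam) (m := m0) hcc
  exact ⟨hr.1, by omega, by omega⟩

lemma colHt_le : colHt l n lam i m0 r0 ≤ n := by
  unfold colHt
  have := Finset.card_filter_le (Icc 1 n)
    (fun r => r0 ≤ lam m0 r ∧ colTab l n lam (r, r0, m0) ≤ i)
  rwa [Nat.card_Icc, Nat.add_sub_cancel] at this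

lemma cCut_le : cCut l n lam i m0 r0 ≤ n := by
  unfold cCut
  have := Finset.card_filter_le (Icc 1 n) (fun c => r0 < colHt l n lam i m0 c)
  rwa [Nat.card_Icc, Nat.add_sub_cancel] at this

lemma cCut_char (hlam : IsMP l n lam) {c : ℕ} (h1 : 1 ≤ c) (h2 : c ≤ n) :
    r0 < colHt l n lam i m0 c ↔ c ≤ cCut l n lam i m0 r0 := by
  have hdc : ∀ a b, a ∈ (Icc 1 n).filter (fun c => r0 < colHt l n lam i m0 c) → 1 ≤ b →
      b ≤ a → b ∈ (Icc 1 n).filter (fun c => r0 < colHt l n lam i m0 c) := by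
    intro a b ha hb1 hba
    simp only [mem_filter, mem_Icc] at ha ⊢
    exact ⟨⟨hb1, by omega⟩, lt_of_lt_of_le ha.2 (colHt_anti hlam hb1 hba)⟩
  constructor
  · intro hlt
    have hsub : Icc 1 c ⊆ (Icc 1 n).filter (fun c => r0 < colHt l n lam i m0 c) := by
      intro y hy
      simp only [mem_Icc] at hy
      exact hdc c y (by simp only [mem_filter, mem_Icc]; exact ⟨⟨h1, h2⟩, hlt⟩) hy.1 hy.2
    have hcard := card_le_card hsub
    rw [Nat.card_Icc, Nat.add_sub_cancel] at hcard
    exact hcard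
  · intro hle
    have hmem := downclosed_mem (filter_subset _ _) hdc h1 hle
    simp only [mem_filter] at hmem
    exact hmem.2

lemma colHt_full (hlam : IsMP l n lam) {c r : ℕ} (h1 : 1 ≤ c)
    (hhc : r0 < colHt l n lam i m0 c) (hr1 : 1 ≤ r) (hr2 : r ≤ r0) :
    c ≤ lam m0 r ∧ colTab l n lam (r, c, m0) ≤ i := by
  have hex : ∃ r'' ∈ (Icc 1 n).filter
      (fun r' => c ≤ lam m0 r' ∧ colTab l n lam (r', c, m0) ≤ i), r0 < r'' := by
    by_contra hcon
    push_neg at hcon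
    have hsub : (Icc 1 n).filter (fun r' => c ≤ lam m0 r' ∧ colTab l n lam (r', c, m0) ≤ i)
        ⊆ Icc 1 r0 := by
      intro y hy
      have h3 := hcon y hy
      simp only [mem_filter, mem_Icc] at hy
      simp only [mem_Icc]
      omega
    have hcard := card_le_card hsub
    rw [Nat.card_Icc, Nat.add_sub_cancel] at hcard
    unfold colHt at hhc
    omega
  obtain ⟨r'', hr'', hgt⟩ := hex
  simp only [mem_filter, mem_Icc] at hr''
  have e1 := colTab_eq (l := l) (n := n) (p := lam) r c m0
  have e2 := colTab_eq (l := l) (n := n) (p := lam) r'' c m0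
  exact ⟨le_trans hr''.2.1 (part_anti hlam m0 hr1 (by omega)), by omega⟩

lemma colHt_leak (hlam : IsMP l n lam) {r c : ℕ} (hd : InDiag lam (r, c, m0))
    (hTi : colTab l n lam (r, c, m0) ≤ i) (hr : r0 < r) :
    r0 < colHt l n lam i m0 c := by
  have hb := indiag_bounds hlam hd
  have hsub : Icc 1 r ⊆ (Icc 1 n).filter
      (fun r' => c ≤ lam m0 r' ∧ colTab l n lam (r', c, m0) ≤ i) := by
    intro y hy
    simp only [mem_Icc] at hy
    simp only [mem_filter, mem_Icc]
    have e1 := colTab_eq (l := l) (n := n) (p := lam) r c m0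
    have e2 := colTab_eq (l := l) (n := n) (p := lam) y c m0
    exact ⟨⟨hy.1, by omega⟩, le_trans hd.2 (part_anti hlam m0 hy.1 hy.2), by omega⟩
  have hcard := card_le_card hsub
  rw [Nat.card_Icc, Nat.add_sub_cancel] at hcard
  unfold colHt
  omega

lemma colDom_dom (hlam : IsMP l n lam) (hmu : IsMP l n mu)
    (hj2 : j ≤ n) (hs : IsTab n mu s)
    (hdom : ColDomOn l n lam mu s j) (hi1 : 1 ≤ i) (hij : i ≤ j) :
    Dom l n (shape n lam (colTab l n lam) i) (shape n mu s i) := by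
  intro m0 r0 hm1 hm2
  have hTinj : ∀ A B, InDiag lam A → InDiag lam B →
      colTab l n lam A = colTab l n lam B → A = B :=
    fun A B hA hB h => colTab_inj hlam hA hB h
  have hTpos : ∀ A, InDiag lam A → 1 ≤ colTab l n lam A := by
    intro A hA
    obtain ⟨r, c, m⟩ := A
    exact (colTab_le_n hlam hA).1
  have hTsurj : ∀ i', 1 ≤ i' → i' ≤ n → ∃ A, InDiag lam A ∧ colTab l n lam A = i' :=
    fun i' h1 h2 => colTab_surj hlam h1 h2
  have hsinj := hs.2.1
  have hspos : ∀ A, InDiag mu A → 1 ≤ s A := fun A hA => (hs.1 A hA).1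
  rw [dsum_eq_Nd hmu hm1 hm2 r0, dsum_eq_Nd hlam hm1 hm2 r0]
  show Nd l n mu s i (QRp m0 r0) ≤ Nd l n lam (colTab l n lam) i (QRp m0 r0)
  set c1 := cCut l n lam i m0 r0 with hc1def
  -- totals
  have htotS : Nd l n mu s i (QRp m0 r0) + Nd l n mu s i (fun A => ¬ QRp m0 r0 A) = i := by
    have h1 := Nd_split (l := l) (n := n) (p := mu) (x := s) (i := i)
      (fun _ => True) (fun A => QRp m0 r0 A)
    beta_reduce at h1
    have e1 : Nd l n mu s i (fun A => True ∧ QRp m0 r0 A) = Nd l n mu s i (QRp m0 r0) :=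
      Nd_congr fun A => ⟨fun h => h.2, fun h => ⟨trivial, h⟩⟩
    have e2 : Nd l n mu s i (fun A => True ∧ ¬ QRp m0 r0 A)
        = Nd l n mu s i (fun A => ¬ QRp m0 r0 A) :=
      Nd_congr fun A => ⟨fun h => h.2, fun h => ⟨trivial, h⟩⟩
    have e3 : Nd l n mu s i (fun _ => True) = i :=
      Nd_true hmu hsinj hspos hs.2.2 (by omega)
    omega
  have htotT : Nd l n lam (colTab l n lam) i (QRp m0 r0) +
      Nd l n lam (colTab l n lam) i (fun A => ¬ QRp m0 r0 A) = i := by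
    have h1 := Nd_split (l := l) (n := n) (p := lam) (x := colTab l n lam) (i := i)
      (fun _ => True) (fun A => QRp m0 r0 A)
    beta_reduce at h1
    have e1 : Nd l n lam (colTab l n lam) i (fun A => True ∧ QRp m0 r0 A)
        = Nd l n lam (colTab l n lam) i (QRp m0 r0) :=
      Nd_congr fun A => ⟨fun h => h.2, fun h => ⟨trivial, h⟩⟩
    have e2 : Nd l n lam (colTab l n lam) i (fun A => True ∧ ¬ QRp m0 r0 A)
        = Nd l n lam (colTab l n lam) i (fun A => ¬ QRp m0 r0 A) :=
      Nd_congr fun A => ⟨fun h => h.2, fun h => ⟨trivial, h⟩⟩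
    have e3 : Nd l n lam (colTab l n lam) i (fun _ => True) = i :=
      Nd_true hlam hTinj hTpos hTsurj (by omega)
    omega
  -- splitting along QL
  have split_t := Nd_split (l := l) (n := n) (p := lam) (x := colTab l n lam) (i := i)
    (fun A => QLp m0 c1 A) (fun A => QRp m0 r0 A)
  have split_s := Nd_split (l := l) (n := n) (p := mu) (x := s) (i := i)
    (fun A => QLp m0 c1 A) (fun A => QRp m0 r0 A)
  beta_reduce at split_t split_s
  -- sub1 : entries of t_lam outside the region lie in the left region
  have sub1 : Nd l n lam (colTab l n lam) i (fun A => ¬ QRp m0 r0 A)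
      ≤ Nd l n lam (colTab l n lam) i (fun A => QLp m0 c1 A ∧ ¬ QRp m0 r0 A) := by
    apply Nd_mono
    intro A hA hTi hnQR
    obtain ⟨r, c, m⟩ := A
    refine ⟨?_, hnQR⟩
    have hb := indiag_bounds hlam hA
    rcases Nat.lt_trichotomy m m0 with h | h | h
    · exact absurd (Or.inl h) hnQR
    · subst h
      have hr0r : r0 < r := by
        by_contra hx
        exact hnQR (Or.inr ⟨rfl, by omega⟩)
      have hleak := colHt_leak (r0 := r0) hlam hA hTi hr0r
      right
      refine ⟨rfl, ?_⟩
      rw [hc1def]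
      exact (cCut_char (c := c) hlam (show 1 ≤ c by omega) (show c ≤ n by omega)).1 hleak
    · exact Or.inl h
  -- sub2 : the block is full for t_lam
  have sub2 : c1 * r0 ≤ Nd l n lam (colTab l n lam) i
      (fun A => QLp m0 c1 A ∧ QRp m0 r0 A) := by
    rcases Nat.eq_zero_or_pos c1 with h0 | hposc
    · rw [h0]; simp
    rcases Nat.eq_zero_or_pos r0 with h0 | hposr
    · rw [h0]; simp
    have hr0n : r0 < n := by
      have hne : 0 < cCut l n lam i m0 r0 := by omega
      rw [show cCut l n lam i m0 r0 = ((Icc 1 n).filter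
        fun c => r0 < colHt l n lam i m0 c).card from rfl, card_pos] at hne
      obtain ⟨c, hc⟩ := hne
      simp only [mem_filter, mem_Icc] at hc
      have := colHt_le (l := l) (n := n) (lam := lam) (i := i) (m0 := m0) (r0 := c)
      omega
    have hcard : ({m0} ×ˢ Icc 1 r0 ×ˢ Icc 1 c1 : Finset (ℕ × ℕ × ℕ)).card = r0 * c1 := by
      simp [Finset.card_product, Nat.card_Icc]
    have hle := Nd_ge (l := l) (n := n) (p := lam) (x := colTab l n lam) (i := i)
      (Q := fun A => QLp m0 c1 A ∧ QRp m0 r0 A)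
      ({m0} ×ˢ Icc 1 r0 ×ˢ Icc 1 c1) ?_
    · have := Nat.mul_comm c1 r0
      omega
    intro z hz
    obtain ⟨m, r, c⟩ := z
    simp only [mem_product, mem_singleton, mem_Icc] at hz
    obtain ⟨hzm, hzr, hzc⟩ := hz
    rw [hzm]
    have hcn : c ≤ n := le_trans hzc.2 (hc1def ▸ cCut_le)
    have hhc : r0 < colHt l n lam i m0 c :=
      (cCut_char hlam hzc.1 hcn).2 (hc1def ▸ hzc.2)
    have hf := colHt_full hlam hzc.1 hhc hzr.1 hzr.2
    refine ⟨?_, hf.1, hf.2, Or.inr ⟨rfl, hzc.2⟩, Or.inr ⟨rfl, hzr.2⟩⟩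
    simp only [mem_product, mem_Icc]
    exact ⟨⟨hm1, hm2⟩, ⟨hzr.1, by omega⟩, ⟨hzc.1, hcn⟩⟩
  -- key2 : transfer from t_lam to s using column dominance
  have key2 : Nd l n lam (colTab l n lam) i (fun A => QLp m0 c1 A)
      ≤ Nd l n mu s i (fun A => QLp m0 c1 A) := by
    rw [Nd_eq_Ent hlam hTinj hTpos, Nd_eq_Ent hmu hsinj hspos]
    apply card_le_card
    intro i' hi'
    simp only [mem_filter, mem_Icc] at hi' ⊢
    obtain ⟨⟨hi'1, hi'2⟩, B, hB, hTB, hQB⟩ := hi'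
    obtain ⟨A, hA, hsA⟩ := hs.2.2 i' hi'1 (by omega)
    have hw := hdom i' A B hi'1 (by omega) hA hsA hB hTB
    refine ⟨⟨hi'1, hi'2⟩, A, hA, hsA, ?_⟩
    unfold WeaklyLeft at hw
    unfold QLp at hQB ⊢
    rcases hw with h | h
    · rcases hQB with h2 | h2 <;> exact Or.inl (by omega)
    · rcases hQB with h2 | h2
      · exact Or.inl (by omega)
      · exact Or.inr ⟨by omega, by omega⟩
  -- sub3 and sub4 for the mu-side
  have sub3 : Nd l n mu s i (fun A => QLp m0 c1 A ∧ ¬ QRp m0 r0 A)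
      ≤ Nd l n mu s i (fun A => ¬ QRp m0 r0 A) :=
    Nd_mono fun A _ _ h => h.2
  have sub4 : Nd l n mu s i (fun A => QLp m0 c1 A ∧ QRp m0 r0 A) ≤ c1 * r0 := by
    have hcard : ({m0} ×ˢ Icc 1 r0 ×ˢ Icc 1 c1 : Finset (ℕ × ℕ × ℕ)).card = r0 * c1 := by
      simp [Finset.card_product, Nat.card_Icc]
    have hge := Nd_le (l := l) (n := n) (p := mu) (x := s) (i := i)
      (Q := fun A => QLp m0 c1 A ∧ QRp m0 r0 A)
      ({m0} ×ˢ Icc 1 r0 ×ˢ Icc 1 c1) ?_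
    · have := Nat.mul_comm c1 r0
      omega
    intro z hzg hzc
    obtain ⟨m, r, c⟩ := z
    simp only [mem_product, mem_Icc] at hzg
    obtain ⟨hd, hxi, hQL, hQR⟩ := hzc
    unfold QLp at hQL
    unfold QRp at hQR
    simp only at hQL hQR
    have hm : m = m0 := by omega
    subst hm
    simp only [mem_product, mem_singleton, mem_Icc]
    refine ⟨by trivial, ⟨hzg.2.1.1, by omega⟩, ⟨hzg.2.2.1, by omega⟩⟩
  omega

end Forward

/-- A standard `μ`-tableau `s` is `λ`-column-dominated on `1,…,j` iff
`Shape(t_λ↓m) ⊵ Shape(s↓m)` for all `m = 1,…,j`. -/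
theorem colDom_iff_shape_dominance (l n : ℕ) (hl : 1 ≤ l) (hn : 1 ≤ n)
    (lam mu : ℕ → ℕ → ℕ) (hlam : IsMP l n lam) (hmu : IsMP l n mu)
    (j : ℕ) (hj1 : 1 ≤ j) (hj2 : j ≤ n)
    (s : Node → ℕ) (hs : IsTab n mu s) (hstd : IsStd mu s) :
    ColDomOn l n lam mu s j ↔
      ∀ m, 1 ≤ m → m ≤ j →
        Dom l n (shape n lam (colTab l n lam) m) (shape n mu s m) := by
  constructor
  · intro hdom m hm1 hm2
    exact colDom_dom hlam hmu hj2 hs hdom hm1 hm2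
  · intro hsh
    exact dom_colDom hl hn hlam hmu hj2 hs hstd hsh

end FS
end
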